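/- arXiv:1108.3518 — 3 statements merged into one kernel-verified Lean document; each statement's English description precedes it below -/
import Mathlib

section
/- Let ρ, σ be density operators on a finite-dimensional Hilbert space and c ∈ [0,1]. If for every unit vector ξ, c·⟨ξ, σ ξ⟩ ≤ ⟨ξ, ρ ξ⟩, then c ≤ 1 - D(ρ,σ)/2, where D(ρ,σ) = tr|ρ - σ| is the trace distance. -/
open Matrix Complex
open scoped ComplexOrder Classical
noncomputable section

/-- Positive semidefinite square root (0 if not psd). -/
def msqrt {n : Type*} [Fintype n] [DecidableEq n] (A : Matrix n n ℂ) : Matrix n n ℂ :=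
  if h : A.PosSemidef then
    h.isHermitian.eigenvectorUnitary.1 * diagonal ((↑) ∘ (√·) ∘ h.isHermitian.eigenvalues) *
      (star h.isHermitian.eigenvectorUnitary : Matrix n n ℂ)
  else 0

/-- Operator absolute value |A| = √(AᴴA). -/
def matAbs {n : Type*} [Fintype n] [DecidableEq n] (A : Matrix n n ℂ) : Matrix n n ℂ :=
  msqrt (Aᴴ * A)

/-- Trace distance D(ρ,σ) = tr|ρ-σ|. -/
def traceDist {n : Type*} [Fintype n] [DecidableEq n] (ρ σ : Matrix n n ℂ) : ℝ :=
  ((matAbs (ρ - σ)).trace).re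

/-- Fidelity F(ρ,σ) = tr √(√ρ σ √ρ). -/
def mFidelity {n : Type*} [Fintype n] [DecidableEq n] (ρ σ : Matrix n n ℂ) : ℝ :=
  ((msqrt (msqrt ρ * σ * msqrt ρ)).trace).re

/-- A density matrix: positive semidefinite with unit trace. -/
def IsDensity {n : Type*} [Fintype n] [DecidableEq n] (ρ : Matrix n n ℂ) : Prop :=
  ρ.PosSemidef ∧ ρ.trace = 1

/-- Uniform quadratic-form domination c·σ ≤ ρ implies c ≤ 1 - D(ρ,σ)/2. -/
theorem le_one_sub_half_traceDist_of_dominates {n : Type*} [Fintype n] [DecidableEq n]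
    (ρ σ : Matrix n n ℂ) (hρ : IsDensity ρ) (hσ : IsDensity σ)
    (c : ℝ) (hc0 : 0 ≤ c) (hc1 : c ≤ 1)
    (hdom : ∀ ξ : n → ℂ, star ξ ⬝ᵥ ξ = 1 →
      c * (star ξ ⬝ᵥ (σ *ᵥ ξ)).re ≤ (star ξ ⬝ᵥ (ρ *ᵥ ξ)).re) :
    c ≤ 1 - traceDist ρ σ / 2 := by
  obtain ⟨hρp, hρt⟩ := hρ
  obtain ⟨hσp, hσt⟩ := hσ
  set Δ : Matrix n n ℂ := σ - ρ with hΔdef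
  have hΔ : Δ.IsHermitian := hσp.1.sub hρp.1
  set U : Matrix n n ℂ := (hΔ.eigenvectorUnitary : Matrix n n ℂ) with hUdef
  set l : n → ℝ := hΔ.eigenvalues with hldef
  have hsU : star U * U = 1 := Unitary.coe_star_mul_self hΔ.eigenvectorUnitary
  have hUs : U * star U = 1 := Unitary.coe_mul_star_self hΔ.eigenvectorUnitary
  have hdiag : star U * Δ * U = diagonal (RCLike.ofReal ∘ l) :=
    by have h := hΔ.conjStarAlgAut_star_eigenvectorUnitary
       simp only [Unitary.conjStarAlgAut_apply, Unitary.coe_star, star_star] at h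
       exact h
  have hspec : Δ = U * diagonal (RCLike.ofReal ∘ l) * star U := hΔ.spectral_theorem
  -- trace distance equals sum of |eigenvalues|
  have hTD : traceDist ρ σ = ∑ i, |l i| := by
    have herm : (ρ - σ)ᴴ = ρ - σ := (hρp.1.sub hσp.1)
    have hprod : (ρ - σ)ᴴ * (ρ - σ) = Δ * Δ := by
      rw [herm, show ρ - σ = -Δ by simp [hΔdef], neg_mul_neg]
    set B : Matrix n n ℂ := U * diagonal (RCLike.ofReal ∘ fun i => |l i|) * star U with hBdef
    have hBpsd : B.PosSemidef := by
      have hd : (diagonal (RCLike.ofReal ∘ fun i => |l i|) : Matrix n n ℂ).PosSemidef := by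
        refine posSemidef_diagonal_iff.mpr fun i => ?_
        simp only [Function.comp_apply]
        exact Complex.zero_le_real.mpr (abs_nonneg _)
      simpa [hBdef, Matrix.star_eq_conjTranspose] using hd.mul_mul_conjTranspose_same U
    have hBsq : B ^ 2 = (ρ - σ)ᴴ * (ρ - σ) := by
      rw [hprod, hspec, pow_two, hBdef]
      have h1 : ∀ (D E : Matrix n n ℂ), (U * D * star U) * (U * E * star U)
          = U * (D * E) * star U := by
        intro D E
        calc (U * D * star U) * (U * E * star U) = U * D * (star U * U) * E * star U := by
              noncomm_ring
          _ = U * (D * E) * star U := by rw [hsU]; noncomm_ring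
      rw [h1, h1, diagonal_mul_diagonal, diagonal_mul_diagonal]
      have hfun : (fun i => (RCLike.ofReal ∘ fun j => |l j|) i * (RCLike.ofReal ∘ fun j => |l j|) i : n → ℂ)
          = (fun i => (RCLike.ofReal ∘ l) i * (RCLike.ofReal ∘ l) i) := by
        funext i
        simp only [Function.comp_apply]
        exact_mod_cast abs_mul_abs_self (l i)
      rw [hfun]
    have hpsd : ((ρ - σ)ᴴ * (ρ - σ)).PosSemidef := posSemidef_conjTranspose_mul_self _
    have hsqrt : matAbs (ρ - σ) = B := by
      rw [matAbs, msqrt, dif_pos hpsd]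
      open scoped MatrixOrder in
      have e1 : hpsd.isHermitian.eigenvectorUnitary.1 *
          diagonal ((↑) ∘ (√·) ∘ hpsd.isHermitian.eigenvalues) *
          (star hpsd.isHermitian.eigenvectorUnitary : Matrix n n ℂ)
          = cfc Real.sqrt ((ρ - σ)ᴴ * (ρ - σ)) := by
        rw [IsHermitian.cfc_eq hpsd.isHermitian Real.sqrt]; rfl
      open scoped MatrixOrder in
      rw [e1, ← cfcₙ_eq_cfc (hf0 := Real.sqrt_zero), ← CFC.sqrt_eq_real_sqrt _ hpsd.nonneg,
        CFC.sqrt_eq_iff _ _ hpsd.nonneg hBpsd.nonneg, ← sq]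
      open scoped MatrixOrder in
      exact hBsq
    rw [traceDist, hsqrt, hBdef, trace_mul_cycle, hsU, one_mul, trace_diagonal]
    simp
  -- quadratic forms in the eigenbasis
  set r : n → ℝ := fun i => ((star U * ρ * U) i i).re with hrdef
  set s : n → ℝ := fun i => ((star U * σ * U) i i).re with hsdef
  have hentry : ∀ (A : Matrix n n ℂ) (i : n),
      (star U * A * U) i i = star (fun j => U j i) ⬝ᵥ (A *ᵥ fun j => U j i) := by
    intro A i
    simp only [mul_apply, dotProduct, mulVec, dotProduct, Pi.star_apply,
      Matrix.star_apply, Finset.sum_mul, Finset.mul_sum]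
    rw [Finset.sum_comm]
    refine Finset.sum_congr rfl fun j _ => Finset.sum_congr rfl fun k _ => ?_
    simp [Matrix.star_eq_conjTranspose, conjTranspose_apply]
    ring
  have hunit : ∀ i : n, star (fun j => U j i) ⬝ᵥ (fun j => U j i) = 1 := by
    intro i
    have h1 : (star U * U) i i = (1 : Matrix n n ℂ) i i := by rw [hsU]
    simp only [mul_apply, one_apply_eq] at h1
    rw [← h1]
    simp [dotProduct, Matrix.star_eq_conjTranspose, conjTranspose_apply]
  have htrace : ∀ A : Matrix n n ℂ, (star U * A * U).trace = A.trace := by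
    intro A
    rw [trace_mul_cycle, hUs, one_mul]
  have hrsum : ∑ i, r i = 1 := by
    have h2 : (star U * ρ * U).trace = 1 := by rw [htrace ρ, hρt]
    calc ∑ i, r i = ((star U * ρ * U).trace).re := by
          simp [hrdef, Matrix.trace, Matrix.diag, Complex.re_sum]
      _ = 1 := by rw [h2]; simp
  have hssum : ∑ i, s i = 1 := by
    have h2 : (star U * σ * U).trace = 1 := by rw [htrace σ, hσt]
    calc ∑ i, s i = ((star U * σ * U).trace).re := by
          simp [hsdef, Matrix.trace, Matrix.diag, Complex.re_sum]
      _ = 1 := by rw [h2]; simp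
  have hdiff : ∀ i, s i - r i = l i := by
    intro i
    have h1 : star U * Δ * U = star U * σ * U - star U * ρ * U := by
      rw [hΔdef]; noncomm_ring
    have h2 : (star U * σ * U) i i - (star U * ρ * U) i i = ((l i : ℂ)) := by
      have := congrArg (fun M : Matrix n n ℂ => M i i) (h1.symm.trans hdiag)
      simpa [diagonal_apply_eq] using this
    have := congrArg Complex.re h2
    simpa [hrdef, hsdef] using this
  have hs_nonneg : ∀ i, 0 ≤ s i := by
    intro i
    have := hσp.re_dotProduct_nonneg (fun j => U j i)
    simpa [hsdef, hentry σ i] using this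
  have hdom' : ∀ i, c * s i ≤ r i := by
    intro i
    have := hdom (fun j => U j i) (hunit i)
    simpa [hrdef, hsdef, hentry ρ i, hentry σ i] using this
  -- sum of eigenvalues is zero
  have hlsum : ∑ i, l i = 0 := by
    have h1 : Δ.trace = ∑ i, (l i : ℂ) := by
      rw [hspec, trace_mul_cycle, hsU, one_mul, trace_diagonal]
      simp
    have h2 : Δ.trace = 0 := by rw [hΔdef, trace_sub, hρt, hσt, sub_self]
    have h3 : (∑ i, (l i : ℂ)) = 0 := by rw [← h1, h2]
    have h4 : ((∑ i, l i : ℝ) : ℂ) = 0 := by push_cast; exact h3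
    exact_mod_cast h4
  -- final estimate
  have key : c ≤ 1 - ∑ i, max (l i) 0 := by
    have hstep : ∀ i, c * s i ≤ s i - max (l i) 0 := by
      intro i
      rcases le_or_gt 0 (l i) with h | h
      · rw [max_eq_left h]
        have := hdom' i
        linarith [hdiff i]
      · rw [max_eq_right h.le]
        have := hs_nonneg i
        nlinarith
    calc c = ∑ i, c * s i := by rw [← Finset.mul_sum, hssum, mul_one]
      _ ≤ ∑ i, (s i - max (l i) 0) := Finset.sum_le_sum fun i _ => hstep i
      _ = 1 - ∑ i, max (l i) 0 := by rw [Finset.sum_sub_distrib, hssum]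
  have habs : ∑ i, |l i| = 2 * ∑ i, max (l i) 0 := by
    have : ∀ i, |l i| = 2 * max (l i) 0 - l i := by
      intro i
      rcases le_or_gt 0 (l i) with h | h
      · rw [_root_.abs_of_nonneg h, max_eq_left h]; ring
      · rw [_root_.abs_of_neg h, max_eq_right h.le]; ring
    rw [Finset.sum_congr rfl fun i _ => this i, Finset.sum_sub_distrib, hlsum,
      ← Finset.mul_sum]
    ring
  rw [hTD, habs]
  linarith
end
end

section
/- Let H be a self-adjoint operator on a finite-dimensional Hilbert space and φ a unit vector, with ΔH := √(⟨φ, H²φ⟩ - ⟨φ, Hφ⟩²). Then for all t with 0 ≤ t·ΔH ≤ π/2, |⟨exp(-itH)φ, φ⟩| ≥ cos(ΔH·t). -/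
open Matrix Kronecker Complex
open scoped ComplexOrder Classical
noncomputable section

lemma sin_ratio {x y : ℝ} (hx : 0 ≤ x) (hxy : x ≤ y) (hy : y ≤ Real.pi) :
    x * Real.sin y ≤ y * Real.sin x := by
  rcases (hx.trans hxy).eq_or_lt with h | hy0
  · have hx0 : x = 0 := le_antisymm (hxy.trans h.symm.le) hx
    simp [hx0, ← h]
  · have hsin : (x / y) * Real.sin y ≤ Real.sin x := by
      have hcon := strictConcaveOn_sin_Icc.concaveOn
      have h0 : (0:ℝ) ∈ Set.Icc 0 Real.pi := ⟨le_refl _, Real.pi_pos.le⟩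
      have hy' : y ∈ Set.Icc 0 Real.pi := ⟨hy0.le, hy⟩
      have ht0 : 0 ≤ 1 - x / y := by
        rw [sub_nonneg]; exact div_le_one_of_le₀ hxy hy0.le
      have ht1 : 0 ≤ x / y := div_nonneg hx hy0.le
      have h2 := hcon.2 h0 hy' ht0 ht1 (by ring)
      simpa [smul_eq_mul, div_mul_cancel₀ x hy0.ne'] using h2
    calc x * Real.sin y = y * ((x / y) * Real.sin y) := by field_simp
    _ ≤ y * Real.sin x := by
        exact mul_le_mul_of_nonneg_left hsin hy0.le

lemma cos_bound {a : ℝ} (ha0 : 0 ≤ a) (ha1 : a ≤ Real.pi / 2) (y : ℝ) :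
    Real.cos a + (if a = 0 then 1/2 else Real.sin a / (2*a)) * (a^2 - y^2) ≤ Real.cos y := by
  rcases ha0.eq_or_lt with h | ha
  · rw [if_pos h.symm, ← h]
    have := Real.one_sub_sq_div_two_le_cos (x := y)
    simp only [Real.cos_zero]
    nlinarith
  · rw [if_neg ha.ne']
    set c := Real.sin a / (2*a) with hc
    have hc0 : 0 ≤ c := by
      apply div_nonneg _ (by linarith)
      exact Real.sin_nonneg_of_nonneg_of_le_pi ha0 (by linarith [Real.pi_pos])
    set g : ℝ → ℝ := fun y => Real.cos y + c * y^2 with hg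
    have hderiv : ∀ y : ℝ, HasDerivAt g (-Real.sin y + c * (2*y)) y := by
      intro y
      have h1 : HasDerivAt (fun y : ℝ => y^2) (2*y) y := by
        simpa using hasDerivAt_pow 2 y
      exact (Real.hasDerivAt_cos y).add (h1.const_mul c)
    have hdg : ∀ y : ℝ, deriv g y = -Real.sin y + c * (2*y) := fun y => (hderiv y).deriv
    have hcont : Continuous g := by fun_prop
    have hpi : a ≤ Real.pi := by linarith [Real.pi_pos]
    have hmin : ∀ z : ℝ, 0 ≤ z → g a ≤ g z := by
      intro z hz
      rcases le_total z a with hza | haz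
      · have hanti : AntitoneOn g (Set.Icc 0 a) := by
          apply antitoneOn_of_deriv_nonpos (convex_Icc 0 a) hcont.continuousOn
            (fun u _ => (hderiv u).differentiableAt.differentiableWithinAt)
          intro u hu
          rw [interior_Icc] at hu
          rw [hdg]
          have := sin_ratio hu.1.le hu.2.le hpi
          have hsu : c * (2*u) ≤ Real.sin u := by
            rw [hc]
            rw [div_mul_eq_mul_div, div_le_iff₀ (by linarith)]
            nlinarith
          linarith
        exact hanti ⟨hz, hza⟩ ⟨ha0, le_refl a⟩ hza
      · have hmono : MonotoneOn g (Set.Ici a) := by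
          apply monotoneOn_of_deriv_nonneg (convex_Ici a) hcont.continuousOn
            (fun u _ => (hderiv u).differentiableAt.differentiableWithinAt)
          intro u hu
          rw [interior_Ici] at hu
          rw [hdg]
          have hu0 : 0 ≤ u := (ha.trans hu).le
          have hsu : Real.sin u ≤ c * (2*u) := by
            rw [hc, div_mul_eq_mul_div, le_div_iff₀ (by linarith)]
            rcases le_total u (Real.pi/2) with hu2 | hu2
            · have := sin_ratio ha0 hu.le (by linarith [Real.pi_pos])
              nlinarith
            · have h1 : Real.sin u ≤ 1 := Real.sin_le_one u
              have h2 : 2/Real.pi * a ≤ Real.sin a := Real.mul_le_sin ha0 ha1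
              have hpi0 : (0:ℝ) < Real.pi := Real.pi_pos
              have : a ≤ Real.sin a * u := by
                calc a = (2/Real.pi * a) * (Real.pi/2) := by field_simp
                _ ≤ Real.sin a * u := by
                    apply mul_le_mul h2 hu2 (by positivity) ?_
                    exact Real.sin_nonneg_of_nonneg_of_le_pi ha0 hpi
              nlinarith
          linarith
        exact hmono (Set.mem_Ici.mpr (le_refl a)) (Set.mem_Ici.mpr haz) haz
    have hgy : g |y| = g y := by
      rcases abs_choice y with h | h <;> rw [h] <;> simp [hg, Real.cos_neg]
    have := hmin |y| (abs_nonneg y)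
    rw [hgy] at this
    simp only [hg] at this
    have hy2 : |y|^2 = y^2 := sq_abs y
    nlinarith

lemma quad_form {N : Type*} [Fintype N] [DecidableEq N] (U : Matrix N N ℂ) (d : N → ℂ) (φ : N → ℂ) :
    star φ ⬝ᵥ ((U * Matrix.diagonal d * star U) *ᵥ φ)
      = ∑ k, d k * (Complex.normSq ((star U *ᵥ φ) k) : ℂ) := by
  set c := star U *ᵥ φ with hcdef
  have h1 : star φ ᵥ* U = star c := by
    rw [hcdef, Matrix.star_mulVec, ← Matrix.star_eq_conjTranspose, star_star]
  calc star φ ⬝ᵥ ((U * Matrix.diagonal d * star U) *ᵥ φ)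
      = star φ ⬝ᵥ (U *ᵥ (Matrix.diagonal d *ᵥ c)) := by
        rw [← Matrix.mulVec_mulVec, ← Matrix.mulVec_mulVec]
    _ = (star φ ᵥ* U) ⬝ᵥ (Matrix.diagonal d *ᵥ c) := by rw [Matrix.dotProduct_mulVec]
    _ = star c ⬝ᵥ (Matrix.diagonal d *ᵥ c) := by rw [h1]
    _ = ∑ k, d k * (Complex.normSq (c k) : ℂ) := by
        simp only [dotProduct, Matrix.mulVec_diagonal, Pi.star_apply]
        refine Finset.sum_congr rfl fun k _ => ?_
        rw [show star (c k) = (starRingEnd ℂ) (c k) from rfl, Complex.normSq_eq_conj_mul_self]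
        ring

/-- Unitary evolution exp(-itA) generated by a Hamiltonian A (ℏ = 1). -/
def Uev {N : Type*} [Fintype N] [DecidableEq N] (A : Matrix N N ℂ) (t : ℝ) :
    Matrix N N ℂ := NormedSpace.exp ((-(t:ℂ) * Complex.I) • A)

/-- Energy uncertainty ΔH = √(⟨φ,H²φ⟩ - ⟨φ,Hφ⟩²). -/
def energyVar {N : Type*} [Fintype N] [DecidableEq N] (H : Matrix N N ℂ) (φ : N → ℂ) : ℝ :=
  Real.sqrt ((star φ ⬝ᵥ (H *ᵥ (H *ᵥ φ))).re - ((star φ ⬝ᵥ (H *ᵥ φ)).re) ^ 2)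

/-- Tensor product of vectors. -/
def tvec {n m : Type*} (φ : n → ℂ) (Ω : m → ℂ) : n × m → ℂ := fun p => φ p.1 * Ω p.2

/-- Mandelstam–Tamm bound on the survival amplitude:
for 0 ≤ t·ΔH ≤ π/2, |⟨exp(-itH)φ, φ⟩| ≥ cos(ΔH·t). -/
theorem mandelstam_tamm {N : Type*} [Fintype N] [DecidableEq N]
    (H : Matrix N N ℂ) (hH : H.IsHermitian) (φ : N → ℂ) (hφ : star φ ⬝ᵥ φ = 1)
    (t : ℝ) (ht0 : 0 ≤ t * energyVar H φ) (ht1 : t * energyVar H φ ≤ Real.pi / 2) :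
    ‖star (Uev H t *ᵥ φ) ⬝ᵥ φ‖ ≥ Real.cos (energyVar H φ * t) := by
  set U : Matrix N N ℂ := ↑(hH.eigenvectorUnitary) with hUdef
  have hU1 : U * star U = 1 := Matrix.mem_unitaryGroup_iff.mp (hH.eigenvectorUnitary).2
  have hU2 : star U * U = 1 := Matrix.mem_unitaryGroup_iff'.mp (hH.eigenvectorUnitary).2
  set lam := hH.eigenvalues with hlam
  have hspec : H = U * Matrix.diagonal (fun k => (lam k : ℂ)) * star U := by
    have h := hH.spectral_theorem
    rw [Unitary.conjStarAlgAut_apply] at h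
    exact h
  set c : N → ℂ := star U *ᵥ φ with hcdef
  set p : N → ℝ := fun k => Complex.normSq (c k) with hpdef
  have hquad : ∀ d : N → ℂ, star φ ⬝ᵥ ((U * Matrix.diagonal d * star U) *ᵥ φ)
      = ∑ k, d k * (p k : ℂ) := fun d => quad_form U d φ
  have hp0 : ∀ k, 0 ≤ p k := fun k => Complex.normSq_nonneg _
  have hp1 : ∑ k, p k = 1 := by
    have h1 : star φ ⬝ᵥ ((U * Matrix.diagonal (fun _ : N => (1:ℂ)) * star U) *ᵥ φ) = 1 := by
      rw [Matrix.diagonal_one, mul_one, hU1, Matrix.one_mulVec, hφ]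
    rw [hquad] at h1
    have h2 : ((∑ k, p k : ℝ) : ℂ) = 1 := by push_cast; simpa using h1
    exact_mod_cast h2
  set μ : ℝ := ∑ k, p k * lam k with hμ
  have hmean : star φ ⬝ᵥ (H *ᵥ φ) = (μ : ℂ) := by
    rw [hspec, hquad, hμ]
    push_cast
    exact Finset.sum_congr rfl fun k _ => by ring
  have hHH : H * H = U * Matrix.diagonal (fun k => ((lam k:ℂ))^2) * star U := by
    rw [hspec]
    rw [show U * Matrix.diagonal (fun k => (lam k:ℂ)) * star U *
        (U * Matrix.diagonal (fun k => (lam k:ℂ)) * star U)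
        = U * (Matrix.diagonal (fun k => (lam k:ℂ)) * ((star U * U) *
          (Matrix.diagonal (fun k => (lam k:ℂ)) * star U))) by
      simp only [Matrix.mul_assoc]]
    rw [hU2, one_mul, ← Matrix.mul_assoc (Matrix.diagonal _) (Matrix.diagonal _) (star U),
      Matrix.diagonal_mul_diagonal, ← Matrix.mul_assoc]
    congr 2
    funext k
    ring
  have hE2 : star φ ⬝ᵥ (H *ᵥ (H *ᵥ φ)) = ((∑ k, p k * lam k^2 : ℝ) : ℂ) := by
    rw [Matrix.mulVec_mulVec, hHH, hquad]
    push_cast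
    exact Finset.sum_congr rfl fun k _ => by ring
  set v : ℝ := ∑ k, p k * (lam k - μ)^2 with hv
  have hv0 : 0 ≤ v := Finset.sum_nonneg fun k _ => mul_nonneg (hp0 k) (sq_nonneg _)
  have hvE : v = (∑ k, p k * lam k^2) - μ^2 := by
    have h1 : v = ∑ k, (p k * lam k^2 - 2*μ*(p k * lam k) + μ^2 * p k) :=
      Finset.sum_congr rfl fun k _ => by ring
    rw [h1, Finset.sum_add_distrib, Finset.sum_sub_distrib, ← Finset.mul_sum, ← Finset.mul_sum,
      hp1, ← hμ]
    ring
  have hvar : energyVar H φ = Real.sqrt v := by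
    rw [energyVar, hE2, hmean, Complex.ofReal_re, Complex.ofReal_re, ← hvE]
  -- amplitude
  set z : ℂ := -(t:ℂ) * Complex.I with hz
  have hsmul : z • H = U * Matrix.diagonal (fun k => z * (lam k : ℂ)) * star U := by
    rw [hspec]
    rw [show (fun k => z * (lam k:ℂ)) = z • (fun k => (lam k:ℂ)) from rfl,
      Matrix.diagonal_smul, Matrix.mul_smul, Matrix.smul_mul]
  have hUev : Uev H t = U * Matrix.diagonal (fun k => Complex.exp (z * (lam k:ℂ))) * star U := by
    have hexp := Matrix.exp_units_conj (⟨U, star U, hU1, hU2⟩ : (Matrix N N ℂ)ˣ)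
      (Matrix.diagonal fun k => z * (lam k:ℂ))
    rw [Uev, ← hz, hsmul]
    rw [show (U * Matrix.diagonal (fun k => z * (lam k:ℂ)) * star U)
        = ↑(⟨U, star U, hU1, hU2⟩ : (Matrix N N ℂ)ˣ) * Matrix.diagonal (fun k => z * (lam k:ℂ))
          * ↑(⟨U, star U, hU1, hU2⟩ : (Matrix N N ℂ)ˣ)⁻¹ from rfl, hexp,
      Matrix.exp_diagonal]
    congr 2
    funext k
    rw [Pi.exp_def, ← Complex.exp_eq_exp_ℂ]
  have hAeq : star φ ⬝ᵥ (Uev H t *ᵥ φ)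
      = ∑ k, Complex.exp (z * (lam k:ℂ)) * (p k : ℂ) := by
    rw [hUev, hquad]
  -- the rotated amplitude
  set B : ℂ := Complex.exp (((t*μ : ℝ):ℂ) * Complex.I) * (star φ ⬝ᵥ (Uev H t *ᵥ φ)) with hB
  have hBsum : B = ∑ k, Complex.exp (((t*μ - t*lam k : ℝ):ℂ) * Complex.I) * (p k:ℂ) := by
    rw [hB, hAeq, Finset.mul_sum]
    refine Finset.sum_congr rfl fun k _ => ?_
    rw [← mul_assoc, ← Complex.exp_add]
    congr 2
    rw [hz]
    push_cast
    ring
  have hBre : B.re = ∑ k, p k * Real.cos (t*μ - t*lam k) := by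
    rw [hBsum, Complex.re_sum]
    refine Finset.sum_congr rfl fun k _ => ?_
    simp only [Complex.mul_re, Complex.ofReal_re, Complex.ofReal_im, mul_zero, sub_zero,
      Complex.exp_ofReal_mul_I_re]
    ring
  have habsB : ‖B‖ = ‖star φ ⬝ᵥ (Uev H t *ᵥ φ)‖ := by
    rw [hB, norm_mul, Complex.norm_exp_ofReal_mul_I, one_mul]
  have habs2 : ‖star (Uev H t *ᵥ φ) ⬝ᵥ φ‖
      = ‖star φ ⬝ᵥ (Uev H t *ᵥ φ)‖ := by
    rw [show star (Uev H t *ᵥ φ) ⬝ᵥ φ = (starRingEnd ℂ) (star φ ⬝ᵥ (Uev H t *ᵥ φ)) from by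
      simp [dotProduct, map_sum, mul_comm], Complex.norm_conj]
  -- real inequality chain
  set a : ℝ := t * energyVar H φ with ha
  have hσ2 : (energyVar H φ)^2 = v := by rw [hvar]; exact Real.sq_sqrt hv0
  have hyk : ∑ k, p k * (t*μ - t*lam k)^2 = a^2 := by
    rw [Finset.sum_congr rfl (fun k _ =>
      show p k * (t*μ - t*lam k)^2 = t^2 * (p k * (lam k - μ)^2) from by ring),
      ← Finset.mul_sum, ← hv, ha, mul_pow, hσ2]
  set cc : ℝ := if a = 0 then (1:ℝ)/2 else Real.sin a/(2*a) with hcc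
  have hkey : ∀ k : N, Real.cos a + cc * (a^2 - (t*μ - t*lam k)^2) ≤ Real.cos (t*μ - t*lam k) :=
    fun k => cos_bound ht0 ht1 _
  have hsum_le : Real.cos a ≤ ∑ k, p k * Real.cos (t*μ - t*lam k) := by
    have h1 : ∑ k, p k * (Real.cos a + cc * (a^2 - (t*μ - t*lam k)^2))
        ≤ ∑ k, p k * Real.cos (t*μ - t*lam k) :=
      Finset.sum_le_sum fun k _ => mul_le_mul_of_nonneg_left (hkey k) (hp0 k)
    have h2 : ∑ k, p k * (Real.cos a + cc * (a^2 - (t*μ - t*lam k)^2)) = Real.cos a := by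
      rw [Finset.sum_congr rfl (fun k _ =>
        show p k * (Real.cos a + cc * (a^2 - (t*μ - t*lam k)^2))
          = (Real.cos a + cc * a^2) * p k - cc * (p k * (t*μ - t*lam k)^2) from by ring),
        Finset.sum_sub_distrib, ← Finset.mul_sum, ← Finset.mul_sum, hp1, hyk]
      ring
    linarith [h1, h2.ge]
  have hfin : Real.cos a ≤ ‖star (Uev H t *ᵥ φ) ⬝ᵥ φ‖ := by
    calc Real.cos a ≤ ∑ k, p k * Real.cos (t*μ - t*lam k) := hsum_le
    _ = B.re := hBre.symm
    _ ≤ ‖B‖ := Complex.re_le_norm B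
    _ = ‖star (Uev H t *ᵥ φ) ⬝ᵥ φ‖ := by rw [habsB, habs2]
  rw [ge_iff_le, show energyVar H φ * t = a from mul_comm _ _]
  exact hfin

end
end

section
/- Let H_c, H_s be Hilbert spaces, H_s and V bounded self-adjoint operators, H_c self-adjoint with spectrum bounded below (or above), H = H_c + H_s + V, and φ_c(0) a unit vector with φ_c(t) = exp(-itH_c)φ_c(0). If V(φ_c(t) ⊗ Ω) = 0 for all t ≤ 0 and all Ω ∈ H_s, then V·exp(-itH)(φ_c(0) ⊗ Ω) = 0 for all t ∈ ℝ and all Ω ∈ H_s. -/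
open Matrix Kronecker Complex
open scoped ComplexOrder Classical
noncomputable section

section Aux

variable {n m : Type*} [Fintype n] [DecidableEq n] [Fintype m] [DecidableEq m]

lemma kron_mulVec_tvec (A : Matrix n n ℂ) (B : Matrix m m ℂ) (φ : n → ℂ) (Ω : m → ℂ) :
    (A ⊗ₖ B) *ᵥ tvec φ Ω = tvec (A *ᵥ φ) (B *ᵥ Ω) := by
  funext p
  simp only [mulVec, dotProduct, tvec, kroneckerMap_apply, Fintype.sum_prod_type,
    Finset.sum_mul_sum]
  exact Finset.sum_congr rfl fun i _ => Finset.sum_congr rfl fun j _ => by ring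

omit [Fintype n] [DecidableEq n] [Fintype m] [DecidableEq m] in
lemma tvec_smul_left (c : ℂ) (φ : n → ℂ) (Ω : m → ℂ) :
    tvec (c • φ) Ω = c • tvec φ Ω := by
  funext p; simp [tvec, mul_assoc]

lemma Uev_eq {N : Type*} [Fintype N] [DecidableEq N] (A : Matrix N N ℂ) (t : ℝ) :
    Uev A t = NormedSpace.exp ((t : ℂ) • ((-Complex.I) • A)) := by
  rw [Uev, smul_smul]
  congr 1
  ring

/-- Entries of the matrix exponential of `t • X` are differentiable in the real variable `t`,
with the expected derivative. -/
lemma hasDerivAt_exp_entry {N : Type*} [Fintype N] [DecidableEq N]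
    (X : Matrix N N ℂ) (t : ℝ) (i j : N) :
    HasDerivAt (fun u : ℝ => NormedSpace.exp ((u : ℂ) • X) i j)
      ((NormedSpace.exp ((t : ℂ) • X) * X) i j) t := by
  letI : SeminormedRing (Matrix N N ℂ) := Matrix.linftyOpSemiNormedRing
  letI : NormedRing (Matrix N N ℂ) := Matrix.linftyOpNormedRing
  letI : NormedAlgebra ℂ (Matrix N N ℂ) := Matrix.linftyOpNormedAlgebra
  have h0 := hasDerivAt_exp_smul_const (𝕂 := ℂ) X (t : ℂ)
  have h : HasDerivAt (fun u : ℝ => NormedSpace.exp ((u : ℂ) • X))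
      (NormedSpace.exp ((t : ℂ) • X) * X) t := by
    have h1 := h0.scomp t Complex.ofRealCLM.hasDerivAt
    simp at h1
    exact h1
  exact (LinearMap.toContinuousLinearMap
    ({ toFun := fun M : Matrix N N ℂ => M i j, map_add' := fun _ _ => rfl,
       map_smul' := fun _ _ => rfl } : Matrix N N ℂ →ₗ[ℝ] ℂ)).hasFDerivAt.comp_hasDerivAt t h

lemma exp_smul_commute {N : Type*} [Fintype N] [DecidableEq N]
    (X : Matrix N N ℂ) (z : ℂ) :
    NormedSpace.exp (z • X) * X = X * NormedSpace.exp (z • X) := by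
  letI : SeminormedRing (Matrix N N ℂ) := Matrix.linftyOpSemiNormedRing
  letI : NormedRing (Matrix N N ℂ) := Matrix.linftyOpNormedRing
  letI : NormedAlgebra ℂ (Matrix N N ℂ) := Matrix.linftyOpNormedAlgebra
  exact (((Commute.refl X).smul_right z).exp_right).symm.eq

lemma exp_neg_mul_exp {N : Type*} [Fintype N] [DecidableEq N]
    (X : Matrix N N ℂ) (z : ℂ) :
    NormedSpace.exp (z • (-X)) * NormedSpace.exp (z • X) = 1 := by
  have h : Commute (z • (-X)) (z • X) := ((Commute.refl X).neg_left.smul_left z).smul_right z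
  rw [← Matrix.exp_add_of_commute _ _ h, ← smul_add, neg_add_cancel, smul_zero,
    NormedSpace.exp_zero]

/-- The post-composition `M ↦ (V (M v)) p` as a linear map. -/
def postL {N : Type*} [Fintype N] [DecidableEq N] (V : Matrix N N ℂ) (v : N → ℂ) (p : N) :
    Matrix N N ℂ →ₗ[ℂ] ℂ where
  toFun M := (V *ᵥ (M *ᵥ v)) p
  map_add' x y := by simp [Matrix.add_mulVec, Matrix.mulVec_add]
  map_smul' r x := by simp [Matrix.smul_mulVec, Matrix.mulVec_smul]

end Aux

/-- Theorem 1 (Hegerfeldt argument): if the clock Hamiltonian has semibounded spectrum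
and the interaction vanishes on φ_c(t)⊗Ω for all t ≤ 0, then it vanishes for all times. -/
theorem interaction_vanishes_of_semibounded {n m : Type*}
    [Fintype n] [DecidableEq n] [Fintype m] [DecidableEq m]
    (Hc : Matrix n n ℂ) (Hs : Matrix m m ℂ) (V : Matrix (n × m) (n × m) ℂ)
    (hHc : Hc.IsHermitian) (hHs : Hs.IsHermitian) (hV : V.IsHermitian)
    (hBdd : BddBelow (spectrum ℝ Hc) ∨ BddAbove (spectrum ℝ Hc))
    (φ0 : n → ℂ) (hφ : star φ0 ⬝ᵥ φ0 = 1)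
    (hcond : ∀ t : ℝ, t ≤ 0 → ∀ Ω : m → ℂ, V *ᵥ tvec (Uev Hc t *ᵥ φ0) Ω = 0) :
    ∀ t : ℝ, ∀ Ω : m → ℂ,
      V *ᵥ (Uev (Hc ⊗ₖ (1 : Matrix m m ℂ) + (1 : Matrix n n ℂ) ⊗ₖ Hs + V) t *ᵥ
        tvec φ0 Ω) = 0 := by
  intro t Ω
  set H : Matrix (n × m) (n × m) ℂ := Hc ⊗ₖ (1 : Matrix m m ℂ) + (1 : Matrix n n ℂ) ⊗ₖ Hs + V
    with hH
  set Xc : Matrix n n ℂ := (-Complex.I) • Hc with hXc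
  set Xs : Matrix m m ℂ := (-Complex.I) • Hs with hXs
  set XH : Matrix (n × m) (n × m) ℂ := Complex.I • H with hXH
  set a : ℝ → Matrix n n ℂ := fun u => NormedSpace.exp ((u : ℂ) • Xc) with ha
  set b : ℝ → Matrix m m ℂ := fun u => NormedSpace.exp ((u : ℂ) • Xs) with hb
  set c : ℝ → Matrix (n × m) (n × m) ℂ := fun u => NormedSpace.exp ((u : ℂ) • XH) with hc
  have hUc : ∀ u : ℝ, Uev Hc u = a u := fun u => Uev_eq Hc u
  -- Step 1 : the interaction vanishes along the full evolution for `s ≤ 0`.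
  have hzero : ∀ s : ℝ, s ≤ 0 → V *ᵥ (Uev H s *ᵥ tvec φ0 Ω) = 0 := by
    intro s hs
    set T : ℝ → (n × m → ℂ) := fun u => tvec (a u *ᵥ φ0) (b u *ᵥ Ω) with hT
    set T' : ℝ → (n × m → ℂ) := fun u =>
      tvec ((a u * Xc) *ᵥ φ0) (b u *ᵥ Ω) + tvec (a u *ᵥ φ0) ((b u * Xs) *ᵥ Ω) with hT'
    set G : ℝ → (n × m → ℂ) := fun u => c u *ᵥ T u with hG
    set G' : ℝ → (n × m → ℂ) := fun u => (c u * XH) *ᵥ T u + c u *ᵥ T' u with hG'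
    have hTq : ∀ (u : ℝ) (q : n × m), HasDerivAt (fun v => T v q) (T' u q) u := by
      intro u q
      have h1 : HasDerivAt (fun v => (a v *ᵥ φ0) q.1) (((a u * Xc) *ᵥ φ0) q.1) u := by
        simp only [ha, mulVec, dotProduct]
        exact HasDerivAt.fun_sum fun j _ => (hasDerivAt_exp_entry Xc u q.1 j).mul_const (φ0 j)
      have h2 : HasDerivAt (fun v => (b v *ᵥ Ω) q.2) (((b u * Xs) *ᵥ Ω) q.2) u := by
        simp only [hb, mulVec, dotProduct]
        exact HasDerivAt.fun_sum fun j _ => (hasDerivAt_exp_entry Xs u q.2 j).mul_const (Ω j)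
      simpa [hT, hT', tvec] using h1.fun_mul h2
    have hGd : ∀ u : ℝ, HasDerivAt G (G' u) u := by
      intro u
      rw [hasDerivAt_pi]
      intro p
      have key : HasDerivAt (fun v => G v p)
          (∑ q, (((c u * XH) p q) * T u q + c u p q * T' u q)) u := by
        simp only [hG, mulVec, dotProduct]
        refine HasDerivAt.fun_sum fun q _ => ?_
        have := (hasDerivAt_exp_entry XH u p q).fun_mul (hTq u q)
        simpa [hc] using this
      simpa [hG', mulVec, dotProduct, Finset.sum_add_distrib] using key
    have hG'0 : ∀ u : ℝ, u ≤ 0 → G' u = 0 := by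
      intro u hu
      have hVT : V *ᵥ T u = 0 := by
        have := hcond u hu (b u *ᵥ Ω)
        rwa [hUc u] at this
      have hHT : H *ᵥ T u = tvec (Hc *ᵥ (a u *ᵥ φ0)) (b u *ᵥ Ω)
          + tvec (a u *ᵥ φ0) (Hs *ᵥ (b u *ᵥ Ω)) := by
        rw [hH, add_mulVec, add_mulVec, hVT, add_zero, hT,
          kron_mulVec_tvec, kron_mulVec_tvec, one_mulVec, one_mulVec]
      have hTa : (a u * Xc) *ᵥ φ0 = (-Complex.I) • (Hc *ᵥ (a u *ᵥ φ0)) := by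
        rw [ha, exp_smul_commute, ← mulVec_mulVec, hXc, smul_mulVec]
      have hTb : (b u * Xs) *ᵥ Ω = (-Complex.I) • (Hs *ᵥ (b u *ᵥ Ω)) := by
        rw [hb, exp_smul_commute, ← mulVec_mulVec, hXs, smul_mulVec]
      have hT'eq : T' u = (-Complex.I) • (tvec (Hc *ᵥ (a u *ᵥ φ0)) (b u *ᵥ Ω)
          + tvec (a u *ᵥ φ0) (Hs *ᵥ (b u *ᵥ Ω))) := by
        rw [hT']
        show tvec ((a u * Xc) *ᵥ φ0) (b u *ᵥ Ω) + tvec (a u *ᵥ φ0) ((b u * Xs) *ᵥ Ω) = _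
        rw [hTa, hTb, tvec_smul_left, smul_add]
        congr 1
        funext p
        simp [tvec]
        ring
      show (c u * XH) *ᵥ T u + c u *ᵥ T' u = 0
      rw [← mulVec_mulVec, hXH, smul_mulVec, hHT, hT'eq, ← mulVec_add, ← mulVec_zero (c u)]
      congr 1
      rw [← add_smul]
      simp
    have hGs : G 0 = G s := by
      rcases eq_or_lt_of_le hs with h | h
      · rw [h]
      · have := constant_of_has_deriv_right_zero
          (f := G) (a := s) (b := 0)
          (fun u _ => (hGd u).continuousAt.continuousWithinAt)
          (fun u hu => by
            have h0 : G' u = 0 := hG'0 u (le_of_lt hu.2)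
            exact h0 ▸ (hGd u).hasDerivWithinAt)
        exact this 0 (Set.right_mem_Icc.2 (le_of_lt h))
    have hG0 : G 0 = tvec φ0 Ω := by
      show c 0 *ᵥ tvec (a 0 *ᵥ φ0) (b 0 *ᵥ Ω) = tvec φ0 Ω
      rw [hc, ha, hb]
      norm_num [NormedSpace.exp_zero, one_mulVec]
    have hinv : Uev H s * c s = 1 := by
      rw [Uev_eq, hc]
      have hneg : (-Complex.I) • H = -XH := by rw [hXH]; simp
      rw [hneg]
      exact exp_neg_mul_exp XH (s : ℂ)
    have hflow : Uev H s *ᵥ tvec φ0 Ω = T s := by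
      have h1 : tvec φ0 Ω = c s *ᵥ T s := (hGs.symm.trans hG0).symm
      rw [h1, mulVec_mulVec, hinv, one_mulVec]
    rw [hflow, hT]
    have := hcond s hs (b s *ᵥ Ω)
    rwa [hUc s] at this
  -- Step 2 : analytic continuation to all times.
  funext p
  set f : ℂ → ℂ := fun z =>
    (V *ᵥ (NormedSpace.exp ((-z * Complex.I) • H) *ᵥ tvec φ0 Ω)) p with hf
  have hfreal : ∀ s : ℝ, s ≤ 0 → f (s : ℂ) = 0 := by
    intro s hs
    have h0 := hzero s hs
    calc f (s : ℂ) = (V *ᵥ (Uev H s *ᵥ tvec φ0 Ω)) p := rfl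
    _ = 0 := by rw [h0]; rfl
  have hana : AnalyticOnNhd ℂ f Set.univ := by
    intro z _
    letI : SeminormedRing (Matrix (n × m) (n × m) ℂ) := Matrix.linftyOpSemiNormedRing
    letI : NormedRing (Matrix (n × m) (n × m) ℂ) := Matrix.linftyOpNormedRing
    letI : NormedAlgebra ℂ (Matrix (n × m) (n × m) ℂ) := Matrix.linftyOpNormedAlgebra
    have h1 : AnalyticAt ℂ (fun z : ℂ => (-z * Complex.I) • H) z :=
      ((analyticAt_id.neg.mul analyticAt_const).smul analyticAt_const)
    have h2 : AnalyticAt ℂ (fun z : ℂ => NormedSpace.exp ((-z * Complex.I) • H)) z :=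
      (NormedSpace.exp_analytic _).comp h1
    exact ((LinearMap.toContinuousLinearMap (postL V (tvec φ0 Ω) p)).analyticAt _).comp h2
  have hfreq : ∃ᶠ z in nhdsWithin (0 : ℂ) {(0 : ℂ)}ᶜ, f z = 0 := by
    have hle : ∀ k : ℕ, (-(1 : ℝ) / (k + 1) : ℝ) ≤ 0 := by
      intro k
      rw [neg_div]
      exact neg_nonpos.2 (by positivity)
    have htend : Filter.Tendsto (fun k : ℕ => ((-(1 : ℝ) / (k + 1) : ℝ) : ℂ))
        Filter.atTop (nhdsWithin (0 : ℂ) {(0 : ℂ)}ᶜ) := by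
      refine tendsto_nhdsWithin_iff.2 ⟨?_, ?_⟩
      · have h3 : Filter.Tendsto (fun k : ℕ => (-(1 : ℝ) / (k + 1) : ℝ))
            Filter.atTop (nhds 0) := by
          simpa [neg_div] using (tendsto_one_div_add_atTop_nhds_zero_nat (𝕜 := ℝ)).neg
        have h4 := (Complex.continuous_ofReal.tendsto 0).comp h3
        simpa [Function.comp_def] using h4
      · refine Filter.Eventually.of_forall fun k => ?_
        simp only [Set.mem_compl_iff, Set.mem_singleton_iff, Complex.ofReal_eq_zero]
        have : (0:ℝ) < 1 / ((k:ℝ) + 1) := by positivity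
        rw [neg_div]
        intro hcontra
        rw [neg_eq_zero] at hcontra
        linarith [hcontra ▸ this]
    exact htend.frequently (Filter.Frequently.of_forall fun k => hfreal _ (hle k))
  have hEq := hana.eqOn_zero_of_preconnected_of_frequently_eq_zero
    isPreconnected_univ (Set.mem_univ (0 : ℂ)) hfreq
  have hft : f (t : ℂ) = 0 := hEq (Set.mem_univ _)
  calc (V *ᵥ (Uev H t *ᵥ tvec φ0 Ω)) p = f (t : ℂ) := rfl
  _ = 0 := hft

end
end
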